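/- Every abelian group G admits a decomposition G = K ⊕ M where K is a bounded torsion group (of finite exponent) and M is a w-divisible group. -/

import Mathlib

/-- The subgroup `nG = {n • g : g ∈ G}` of an abelian group `G`. -/
def nsmulRange (n : ℕ) (G : Type) [AddCommGroup G] : AddSubgroup G :=
  (n • AddMonoidHom.id G).range

/-- An abelian group is `w`-divisible if `|nG| = |G|` for every positive integer `n`. -/
def WDivisible (G : Type) [AddCommGroup G] : Prop :=
  ∀ n : ℕ, 0 < n → Cardinal.mk ↥(nsmulRange n G) = Cardinal.mk G

/-- An abelian group is strongly unbounded if it contains an internal direct sum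
`⊕_{i ∈ I} A_i` of subgroups with `|I| = |G|` and each `A_i` unbounded
(of infinite exponent). -/
def StronglyUnbounded (G : Type) [AddCommGroup G] : Prop :=
  ∃ (I : Type) (A : I → AddSubgroup G), Cardinal.mk I = Cardinal.mk G ∧
    iSupIndep A ∧ ∀ i, ∀ n : ℕ, 0 < n → ∃ a ∈ A i, n • a ≠ 0

open AddSubgroup



section S1
variable {G : Type} [AddCommGroup G]

lemma bezout_of_prime_not_dvd {p : ℕ} (hp : p.Prime) {k : ℤ} (h : ¬ (p:ℤ) ∣ k) :
    ∃ α β : ℤ, α * k + β * (p:ℤ) = 1 := by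
  have h1 : ¬ p ∣ k.natAbs := fun hd => h (Int.natCast_dvd_natCast.mpr hd |>.trans (Int.natAbs_dvd.mpr dvd_rfl))
  have h2 : Nat.Coprime k.natAbs p := Nat.coprime_comm.mp (hp.coprime_iff_not_dvd.mpr h1)
  have h3 : IsCoprime k (p:ℤ) := by
    rw [Int.isCoprime_iff_gcd_eq_one]
    simpa [Int.gcd] using h2
  exact h3

/-- mult by n as an AddMonoidHom -/
abbrev smHom (n : ℕ) : G →+ G := n • AddMonoidHom.id G

lemma smHom_apply (n : ℕ) (x : G) : smHom n x = n • x := rfl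
end S1

section Splitting
variable {G : Type} [AddCommGroup G]

/-- defs duplicated for testing -/
def sm' (n : ℕ) (S : AddSubgroup G) : AddSubgroup G := S.map (n • AddMonoidHom.id G)

lemma mem_sm' {n : ℕ} {S : AddSubgroup G} {x : G} : x ∈ sm' n S ↔ ∃ s ∈ S, n • s = x := by
  simp [sm', AddSubgroup.mem_map]

lemma S1 {p : ℕ} (hp : p.Prime) (H V : AddSubgroup G) (hVH : V ≤ H)
    (hdisj : ∀ x ∈ V, x ∈ sm' p H → x = 0) :
    ∃ M : AddSubgroup G, M ≤ H ∧ V ⊓ M = ⊥ ∧ ∀ h ∈ H, h ∈ V ⊔ M := by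
  classical
  set s : Set (AddSubgroup G) :=
    {T | T ≤ H ∧ sm' p H ≤ T ∧ ∀ x ∈ T, x ∈ V → x = 0} with hs
  have hT0 : sm' p H ∈ s := by
    refine ⟨?_, le_rfl, fun x hx hxV => hdisj x hxV hx⟩
    intro x hx; rcases mem_sm'.1 hx with ⟨h, hh, rfl⟩; exact nsmul_mem hh p
  obtain ⟨T, -, hTmax⟩ := zorn_le_nonempty₀ s (fun c hcs hchain y hy => by
    refine ⟨sSup c, ?_, fun z hz => le_sSup hz⟩
    have hcne : c.Nonempty := ⟨y, hy⟩
    have hdir : DirectedOn (· ≤ ·) c := hchain.directedOn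
    have hmem : ∀ x : G, x ∈ sSup c ↔ ∃ T ∈ c, x ∈ T := fun x =>
      AddSubgroup.mem_sSup_of_directedOn hcne hdir
    refine ⟨?_, ?_, ?_⟩
    · exact sSup_le fun T hT => (hcs hT).1
    · exact le_trans (hcs hy).2.1 (le_sSup hy)
    · intro x hx hxV
      rcases (hmem x).1 hx with ⟨T, hTc, hxT⟩
      exact (hcs hTc).2.2 x hxT hxV) (sm' p H) hT0
  have hTs := hTmax.prop
  refine ⟨T, hTs.1, ?_, ?_⟩
  · rw [eq_bot_iff]; intro x hx
    exact (AddSubgroup.mem_bot).2 (hTs.2.2 x hx.2 hx.1)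
  · intro h hh
    by_contra hnot
    -- maximality violated by T ⊔ zmultiples h
    set T' := T ⊔ AddSubgroup.zmultiples h with hT'
    have hhT : h ∉ T := fun hc => hnot (AddSubgroup.mem_sup_right hc)
    have hT'warr : ¬ (T' ∈ s) := by
      intro hT's
      have : T' ≤ T := hTmax.le_of_ge hT's le_sup_left
      exact hhT (this (AddSubgroup.mem_sup_right (AddSubgroup.mem_zmultiples h)))
    have hT'1 : T' ≤ H := sup_le hTs.1 ((AddSubgroup.zmultiples_le).2 hh)
    have hT'2 : sm' p H ≤ T' := le_trans hTs.2.1 le_sup_left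
    -- so disjointness fails
    have : ∃ v, v ∈ T' ∧ v ∈ V ∧ v ≠ 0 := by
      by_contra hno
      push_neg at hno
      exact hT'warr ⟨hT'1, hT'2, fun x hx hxV => hno x hx hxV⟩
    obtain ⟨v, hvT', hvV, hv0⟩ := this
    rcases AddSubgroup.mem_sup.1 hvT' with ⟨t, ht, z, hz, hzv⟩
    rcases AddSubgroup.mem_zmultiples_iff.1 hz with ⟨k, rfl⟩
    have hpz : p • h ∈ T := hTs.2.1 (mem_sm'.2 ⟨h, hh, rfl⟩)
    by_cases hpk : (p : ℤ) ∣ k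
    · rcases hpk with ⟨k', rfl⟩
      have : (p * k') • h = k' • ((p:ℕ) • h) := by
        rw [← natCast_zsmul, smul_smul, mul_comm]
      have hzT : ((p:ℤ) * k') • h ∈ T := by rw [this]; exact zsmul_mem hpz k'
      have : v ∈ T := by rw [← hzv]; exact add_mem ht hzT
      exact hv0 (hTs.2.2 v this hvV)
    · obtain ⟨α, β, hαβ⟩ := bezout_of_prime_not_dvd hp hpk
      have hkh : k • h = v - t := by rw [← hzv]; abel
      have hX : h = α • (k • h) + β • ((p:ℤ) • h) := by
        rw [smul_smul, smul_smul, ← add_smul, hαβ, one_smul]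
      have hX2 : h = α • v - α • t + β • ((p:ℤ) • h) := by
        conv_lhs => rw [hX]
        rw [hkh, smul_sub]
      have : h ∈ V ⊔ T := by
        rw [hX2]
        refine add_mem (sub_mem ?_ ?_) ?_
        · exact AddSubgroup.mem_sup_left (zsmul_mem hvV α)
        · exact AddSubgroup.mem_sup_right (zsmul_mem ht α)
        · exact AddSubgroup.mem_sup_right (zsmul_mem (by rw [natCast_zsmul]; exact hpz) β)
      exact hnot this

end Splitting

section S2S3
variable {G : Type} [AddCommGroup G]

def PureIn' (V H : AddSubgroup G) : Prop :=
  ∀ (n : ℕ) (x : G), x ∈ V → x ∈ sm' n H → x ∈ sm' n V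

lemma sm'_mono {n : ℕ} {S T : AddSubgroup G} (h : S ≤ T) : sm' n S ≤ sm' n T := by
  intro x hx; rcases mem_sm'.1 hx with ⟨s, hs, rfl⟩; exact mem_sm'.2 ⟨s, h hs, rfl⟩

lemma sm'_le_self (n : ℕ) (S : AddSubgroup G) : sm' n S ≤ S := by
  intro x hx; rcases mem_sm'.1 hx with ⟨s, hs, rfl⟩; exact nsmul_mem hs n

lemma S2 {p : ℕ} (hp : p.Prime) :
    ∀ (k : ℕ) (H V : AddSubgroup G), V ≤ H → (∀ x ∈ V, p ^ k • x = 0) →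
    PureIn' V H →
    ∃ M : AddSubgroup G, M ≤ H ∧ V ⊓ M = ⊥ ∧ ∀ h ∈ H, h ∈ V ⊔ M := by
  intro k
  induction k with
  | zero =>
    intro H V hVH hb _hpure
    refine ⟨H, le_rfl, ?_, fun h hh => AddSubgroup.mem_sup_right hh⟩
    rw [eq_bot_iff]
    intro x hx
    have := hb x hx.1
    rw [pow_zero, one_smul] at this
    simpa using this
  | succ k IH =>
    intro H V hVH hb hpure
    set H₁ := sm' p H with hH₁
    set V₁ := sm' p V with hV₁
    have hVH₁ : V₁ ≤ H₁ := sm'_mono hVH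
    have hb₁ : ∀ x ∈ V₁, p ^ k • x = 0 := by
      intro x hx
      rcases mem_sm'.1 hx with ⟨v, hv, rfl⟩
      rw [smul_smul, ← pow_succ, hb v hv]
    have hpure₁ : PureIn' V₁ H₁ := by
      intro n x hxV₁ hxn
      rcases mem_sm'.1 hxn with ⟨h₁, hh₁, hxeq⟩
      have hxV : x ∈ V := sm'_le_self p V hxV₁
      rcases mem_sm'.1 hh₁ with ⟨h, hh, hheq⟩
      have hx' : x ∈ sm' (n * p) V :=
        hpure (n * p) x hxV (mem_sm'.2 ⟨h, hh, by rw [← smul_smul, hheq, hxeq]⟩)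
      rcases mem_sm'.1 hx' with ⟨v, hv, hveq⟩
      exact mem_sm'.2 ⟨p • v, mem_sm'.2 ⟨v, hv, rfl⟩, by rw [smul_smul]; exact hveq⟩
    obtain ⟨C, hCH₁, hVC, hsupC⟩ := IH H₁ V₁ hVH₁ hb₁ hpure₁
    set L := H ⊓ AddSubgroup.comap (p • AddMonoidHom.id G) C with hL
    have hmemL : ∀ x : G, x ∈ L ↔ x ∈ H ∧ p • x ∈ C := by
      intro x; rfl
    set S := V ⊓ L with hS
    have hSb : ∀ x ∈ S, p • x = 0 := by
      rintro x ⟨hxV, hxL⟩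
      have h1 : p • x ∈ C := ((hmemL x).1 hxL).2
      have h2 : p • x ∈ V₁ := mem_sm'.2 ⟨x, hxV, rfl⟩
      have : p • x ∈ V₁ ⊓ C := ⟨h2, h1⟩
      rw [hVC] at this; simpa using this
    have hSdisj : ∀ x ∈ S, x ∈ sm' p L → x = 0 := by
      rintro x ⟨hxV, hxL⟩ hxp
      rcases mem_sm'.1 hxp with ⟨l, hl, rfl⟩
      have hlH : l ∈ H := ((hmemL l).1 hl).1
      have h1 : p • l ∈ C := ((hmemL l).1 hl).2
      have h2 : p • l ∈ V₁ := hpure p _ hxV (mem_sm'.2 ⟨l, hlH, rfl⟩)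
      have : p • l ∈ V₁ ⊓ C := ⟨h2, h1⟩
      rw [hVC] at this; simpa using this
    obtain ⟨M, hML, hSM, hsupM⟩ := S1 hp L S inf_le_right hSdisj
    refine ⟨M, le_trans hML inf_le_left, ?_, ?_⟩
    · rw [eq_bot_iff]
      rintro x ⟨hxV, hxM⟩
      have hxL : x ∈ L := hML hxM
      have : x ∈ S ⊓ M := ⟨⟨hxV, hxL⟩, hxM⟩
      rw [hSM] at this; simpa using this
    · intro h hh
      have hph : p • h ∈ H₁ := mem_sm'.2 ⟨h, hh, rfl⟩
      have := hsupC _ hph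
      rcases AddSubgroup.mem_sup.1 this with ⟨a, ha, c, hc, hac⟩
      rcases mem_sm'.1 ha with ⟨v, hv, rfl⟩
      have hhv : h - v ∈ L := by
        rw [hmemL]
        refine ⟨sub_mem hh (hVH hv), ?_⟩
        have : p • (h - v) = c := by rw [smul_sub, ← hac]; abel
        rw [this]; exact hc
      have := hsupM _ hhv
      rcases AddSubgroup.mem_sup.1 this with ⟨s, hs, m, hm, hsm⟩
      have heq : h = v + (s + m) := by rw [hsm]; abel
      rw [heq]
      exact add_mem (AddSubgroup.mem_sup_left hv)
        (add_mem (AddSubgroup.mem_sup_left hs.1) (AddSubgroup.mem_sup_right hm))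

end S2S3

section S3sec
variable {G : Type} [AddCommGroup G]

lemma S3 : ∀ (d : ℕ), 0 < d → ∀ (H V : AddSubgroup G), V ≤ H → (∀ x ∈ V, d • x = 0) →
    PureIn' V H → ∃ M : AddSubgroup G, M ≤ H ∧ V ⊓ M = ⊥ ∧ ∀ h ∈ H, h ∈ V ⊔ M := by
  intro d
  induction d using Nat.strong_induction_on with
  | _ d IH =>
  intro hd H V hVH hb hpure
  by_cases hd1 : d = 1
  · -- d = 1
    subst hd1
    refine ⟨H, le_rfl, ?_, fun h hh => AddSubgroup.mem_sup_right hh⟩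
    rw [eq_bot_iff]
    intro x hx
    have := hb x hx.1
    rw [one_smul] at this
    simpa using this
  · -- d ≥ 2
    set p := d.minFac with hp'
    have hp : p.Prime := Nat.minFac_prime (by omega)
    set a := d.factorization p with ha'
    have hpd : p ∣ d := Nat.minFac_dvd d
    have ha : 0 < a := hp.factorization_pos_of_dvd (by omega) hpd
    set e := d / p ^ a with he'
    have hde : p ^ a * e = d := Nat.ordProj_mul_ordCompl_eq_self d p
    have hpe : ¬ p ∣ e := by
      rw [he', ha']
      exact Nat.not_dvd_ordCompl (n := d) hp (by omega)
    have he0 : 0 < e := Nat.pos_of_ne_zero (fun h0 => by rw [h0, mul_zero] at hde; omega)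
    have hpa1 : 1 < p ^ a := Nat.one_lt_pow (by omega) hp.one_lt
    have hed : e < d := by
      rw [he']; exact Nat.div_lt_self (by omega) hpa1
    have hcop : Nat.Coprime (p ^ a) e := (hp.coprime_iff_not_dvd.mpr hpe).pow_left a
    obtain ⟨α, β, hαβ⟩ : ∃ α β : ℤ, α * (p ^ a : ℕ) + β * (e : ℕ) = 1 := by
      have := Nat.isCoprime_iff_coprime.mpr hcop
      rcases this with ⟨α, β, h⟩
      exact ⟨α, β, h⟩
    set Vp := V ⊓ (p ^ a • AddMonoidHom.id G).ker with hVp'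
    have hmemVp : ∀ x : G, x ∈ Vp ↔ x ∈ V ∧ p ^ a • x = 0 := by
      intro x
      constructor
      · rintro ⟨h1, h2⟩; exact ⟨h1, h2⟩
      · rintro ⟨h1, h2⟩; exact ⟨h1, h2⟩
    -- key zsmul computations
    have hcast : ∀ (m : ℕ) (x : G), (m : ℤ) • x = m • x := fun m x => natCast_zsmul x m
    have hbz : ∀ x ∈ V, (d : ℤ) • x = 0 := by
      intro x hx; rw [hcast]; exact hb x hx
    have hkillp : ∀ x ∈ V, p ^ a • ((β * e) • x) = 0 := by
      intro x hx
      rw [← hcast, smul_smul]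
      have : ((p ^ a : ℕ) : ℤ) * (β * e) = β * d := by
        push_cast [← hde]; ring
      rw [this, mul_smul, hbz x hx, smul_zero]
    have hVpb : ∀ x ∈ Vp, p ^ a • x = 0 := fun x hx => ((hmemVp x).1 hx).2
    have hVppure : PureIn' Vp H := by
      intro n x hxVp hxn
      have hxV : x ∈ V := ((hmemVp x).1 hxVp).1
      rcases mem_sm'.1 (hpure n x hxV hxn) with ⟨v, hv, hveq⟩
      refine mem_sm'.2 ⟨(β * e) • v, (hmemVp _).2 ⟨zsmul_mem hv _, hkillp v hv⟩, ?_⟩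
      have h1 : n • (β * e) • v = (β * e) • x := by
        rw [smul_comm, hveq]
      rw [h1]
      -- (β*e)•x = x  since (α*p^a)•x = 0 on Vp
      have h2 : (α * (p ^ a : ℕ)) • x = 0 := by
        rw [mul_smul, hcast, hVpb x hxVp, smul_zero]
      have h3 : (β * (e : ℕ)) • x + (α * (p ^ a : ℕ)) • x = x := by
        rw [← add_zsmul]
        have : β * (e : ℕ) + α * (p ^ a : ℕ) = 1 := by linarith [hαβ]
        rw [this, one_zsmul]
      rw [h2, add_zero] at h3
      exact h3
    obtain ⟨G₂, hG₂H, hVpG₂, hsupG₂⟩ :=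
      S2 hp a H Vp (le_trans inf_le_left hVH) hVpb hVppure
    set Vt := V ⊓ G₂ with hVt'
    have hVtb : ∀ x ∈ Vt, e • x = 0 := by
      rintro x ⟨hxV, hxG₂⟩
      have h1 : e • x ∈ V := nsmul_mem hxV e
      have h2 : p ^ a • (e • x) = 0 := by
        rw [smul_smul, hde]; exact hb x hxV
      have h3 : e • x ∈ Vp := (hmemVp _).2 ⟨h1, h2⟩
      have h4 : e • x ∈ G₂ := nsmul_mem hxG₂ e
      have : e • x ∈ Vp ⊓ G₂ := ⟨h3, h4⟩
      rw [hVpG₂] at this; simpa using this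
    have hVtpure : PureIn' Vt G₂ := by
      rintro n x ⟨hxV, hxG₂⟩ hxn
      have hxnH : x ∈ sm' n H := sm'_mono hG₂H hxn
      rcases mem_sm'.1 (hpure n x hxV hxnH) with ⟨v, hv, hveq⟩
      set w := (α * (p ^ a : ℕ)) • v with hw'
      have hwV : w ∈ V := zsmul_mem hv _
      have hnw : n • w = x := by
        have h1 : n • w = (α * (p ^ a : ℕ)) • (n • v) := smul_comm _ _ _
        rw [h1, hveq]
        have h2 : (β * (e : ℕ)) • x = 0 := by
          rw [mul_smul, hcast, hVtb x ⟨hxV, hxG₂⟩, smul_zero]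
        have h3 : (β * (e : ℕ)) • x + (α * (p ^ a : ℕ)) • x = x := by
          rw [← add_zsmul]
          have : β * (e : ℕ) + α * (p ^ a : ℕ) = 1 := by linarith [hαβ]
          rw [this, one_zsmul]
        rw [h2, zero_add] at h3
        exact h3
      -- split w across Vp ⊕ G₂
      rcases AddSubgroup.mem_sup.1 (hsupG₂ w (hVH hwV)) with ⟨u, hu, g, hg, hug⟩
      have hgV : g ∈ V := by
        have : g = w - u := by rw [← hug]; abel
        rw [this]; exact sub_mem hwV ((hmemVp u).1 hu).1
      have hnu : n • u = 0 := by
        have h1 : n • u + n • g = x := by rw [← smul_add, hug, hnw]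
        have h2 : n • u = x - n • g := by rw [← h1]; abel
        have h3 : n • u ∈ G₂ := by rw [h2]; exact sub_mem hxG₂ (nsmul_mem hg n)
        have h4 : n • u ∈ Vp := nsmul_mem hu n
        have : n • u ∈ Vp ⊓ G₂ := ⟨h4, h3⟩
        rw [hVpG₂] at this; simpa using this
      have hng : n • g = x := by
        have h1 : n • u + n • g = x := by rw [← smul_add, hug, hnw]
        rw [hnu, zero_add] at h1; exact h1
      exact mem_sm'.2 ⟨g, ⟨hgV, hg⟩, hng⟩
    obtain ⟨M, hMG₂, hVtM, hsupM⟩ := IH e hed he0 G₂ Vt inf_le_right hVtb hVtpure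
    refine ⟨M, le_trans hMG₂ hG₂H, ?_, ?_⟩
    · rw [eq_bot_iff]
      rintro x ⟨hxV, hxM⟩
      have : x ∈ Vt ⊓ M := ⟨⟨hxV, hMG₂ hxM⟩, hxM⟩
      rw [hVtM] at this; simpa using this
    · intro h hh
      rcases AddSubgroup.mem_sup.1 (hsupG₂ h hh) with ⟨u, hu, g, hg, hug⟩
      have := hsupM g hg
      rcases AddSubgroup.mem_sup.1 this with ⟨vt, hvt, m, hm, hvm⟩
      have heq : h = (u + vt) + m := by rw [← hug, ← hvm]; abel
      rw [heq]
      exact add_mem (AddSubgroup.mem_sup_left (add_mem ((hmemVp u).1 hu).1 hvt.1))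
        (AddSubgroup.mem_sup_right hm)

end S3sec

section Height
variable {G : Type} [AddCommGroup G]

lemma exists_pfactor {p : ℕ} (hp : p.Prime) : ∀ (c : ℕ) (k : ℤ), ¬ ((p:ℤ)^c ∣ k) →
    ∃ (v : ℕ) (k' : ℤ), v < c ∧ k = (p:ℤ)^v * k' ∧ ¬ (p:ℤ) ∣ k' := by
  intro c
  induction c with
  | zero => intro k h; exact absurd (by simpa using (one_dvd k : (1:ℤ) ∣ k)) h
  | succ c IH =>
    intro k h
    by_cases hpk : (p:ℤ) ∣ k
    · rcases hpk with ⟨k₁, rfl⟩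
      have h1 : ¬ (p:ℤ)^c ∣ k₁ := fun hd => h (by
        rcases hd with ⟨t, rfl⟩; exact ⟨t, by ring⟩)
      rcases IH k₁ h1 with ⟨v, k', hv, hk, hp'⟩
      exact ⟨v+1, k', by omega, by rw [hk]; ring, hp'⟩
    · exact ⟨0, k, by omega, by ring, hpk⟩

lemma height_pure {p : ℕ} (hp : p.Prime) (M : AddSubgroup G) (x y : G) (h : ℕ)
    (hyM : y ∈ M) (hyx : p ^ h • y = x) (hx0 : x ≠ 0) (hpx : p • x = 0)
    (hxh : x ∉ sm' (p ^ (h+1)) M) :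
    PureIn' (AddSubgroup.zmultiples y) M := by
  have hcast : ∀ (m : ℕ) (u : G), (m : ℤ) • u = m • u := fun m u => natCast_zsmul u m
  have hph1y : ((p ^ (h+1) : ℕ) : ℤ) • y = 0 := by
    rw [hcast, pow_succ, mul_comm, mul_smul, hyx, hpx]
  intro n z hz hzn
  rcases AddSubgroup.mem_zmultiples_iff.1 hz with ⟨k, rfl⟩
  rcases mem_sm'.1 hzn with ⟨m, hm, hnm⟩
  obtain ⟨c, hcle, hgcd⟩ :=
    (Nat.dvd_prime_pow hp).1 (Nat.gcd_dvd_right n (p ^ (h+1)))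
  have hbez := Nat.gcd_eq_gcd_ab n (p ^ (h+1))
  by_cases hdvd : (p:ℤ)^c ∣ k
  · -- can solve the congruence
    rcases hdvd with ⟨q, hq⟩
    set s := Nat.gcdA n (p ^ (h+1)) * q with hs
    have key : (n : ℤ) * s - k = -(q * ((p ^ (h+1) : ℕ) : ℤ) * Nat.gcdB n (p ^ (h+1))) := by
      have h1 : ((p:ℤ))^c = (n : ℤ) * Nat.gcdA n (p ^ (h+1)) +
          ((p ^ (h+1) : ℕ) : ℤ) * Nat.gcdB n (p ^ (h+1)) := by
        rw [← hbez, hgcd]; push_cast; ring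
      rw [hq, h1]; ring
    refine mem_sm'.2 ⟨s • y, zsmul_mem (AddSubgroup.mem_zmultiples y) s, ?_⟩
    have h2 : n • s • y = ((n : ℤ) * s) • y := by rw [← hcast, smul_smul]
    have h3 : ((n : ℤ) * s) • y = k • y + (((n : ℤ) * s - k)) • y := by
      rw [← add_zsmul]; ring_nf
    rw [h2, h3, key]
    have h4 : (-(q * ((p ^ (h+1) : ℕ) : ℤ) * Nat.gcdB n (p ^ (h+1)))) • y = 0 := by
      have : -(q * ((p ^ (h+1) : ℕ) : ℤ) * Nat.gcdB n (p ^ (h+1)))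
          = (-(q * Nat.gcdB n (p ^ (h+1)))) * ((p ^ (h+1) : ℕ) : ℤ) := by ring
      rw [this, mul_smul, hph1y, smul_zero]
    rw [h4, add_zero]
  · -- impossible: contradicts height
    exfalso
    have hc1 : 0 < c := by
      rcases Nat.eq_zero_or_pos c with h0 | h1
      · exact absurd (by rw [h0, pow_zero]; exact one_dvd k) hdvd
      · exact h1
    obtain ⟨v, k', hvc, hkk, hpk'⟩ := exists_pfactor hp c k hdvd
    have hvh : v ≤ h := by omega
    have hpvn : p ^ (v+1) ∣ n := by
      have h1 : p ^ c ∣ n := hgcd ▸ Nat.gcd_dvd_left n (p ^ (h+1))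
      exact dvd_trans (pow_dvd_pow p (by omega)) h1
    rcases hpvn with ⟨n', hn'⟩
    -- compute (p:ℤ)^(h-v) • z two ways
    have hA : (p:ℤ)^(h-v) • (k • y) = k' • x := by
      rw [smul_smul, hkk]
      have : (p:ℤ)^(h-v) * ((p:ℤ)^v * k') = k' * ((p ^ h : ℕ) : ℤ) := by
        push_cast
        rw [← mul_assoc, ← pow_add, show h - v + v = h by omega]; ring
      rw [this, mul_smul, hcast, hyx]
    have hB : (p:ℤ)^(h-v) • (k • y) ∈ sm' (p ^ (h+1)) M := by
      rw [← hnm, ← hcast n m, smul_smul]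
      have : (p:ℤ)^(h-v) * (n : ℤ) = ((p ^ (h+1) : ℕ) : ℤ) * (n' : ℤ) := by
        rw [hn']; push_cast
        rw [← mul_assoc, ← pow_add, show h - v + (v + 1) = h + 1 by omega]
      rw [this, mul_smul, hcast, hcast]
      exact mem_sm'.2 ⟨n' • m, nsmul_mem hm n', rfl⟩
    rw [hA] at hB
    obtain ⟨α, β, hαβ⟩ := bezout_of_prime_not_dvd hp hpk'
    have hxmem : x ∈ sm' (p ^ (h+1)) M := by
      have h5 : x = α • (k' • x) + β • ((p:ℤ) • x) := by
        rw [smul_smul, smul_smul, ← add_zsmul, hαβ, one_zsmul]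
      have h6 : (p:ℤ) • x = 0 := by rw [hcast p x]; exact hpx
      rw [h6, smul_zero, add_zero] at h5
      rw [h5]
      exact zsmul_mem hB α
    exact hxh hxmem

end Height

section LemC
variable {G : Type} [AddCommGroup G]
open Cardinal

lemma mk_mono' {S T : AddSubgroup G} (h : S ≤ T) : Cardinal.mk ↥S ≤ Cardinal.mk ↥T :=
  Cardinal.mk_le_mk_of_subset h

lemma mk_le_map_mul_ker' (S : AddSubgroup G) (f : G →+ G) :
    Cardinal.mk ↥S ≤ Cardinal.mk ↥(S.map f) * Cardinal.mk ↥(S ⊓ f.ker) := by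
  have hmem : ∀ s : ↥S, f s ∈ S.map f := fun s => AddSubgroup.mem_map.2 ⟨s, s.2, rfl⟩
  set F : ↥S → ↥(S.map f) := fun s => ⟨f s, hmem s⟩ with hF
  have hsurj : ∀ b : ↥(S.map f), ∃ s : ↥S, F s = b := by
    rintro ⟨b, hb⟩
    rcases AddSubgroup.mem_map.1 hb with ⟨s, hs, rfl⟩
    exact ⟨⟨s, hs⟩, rfl⟩
  choose g hg using hsurj
  have hker : ∀ s : ↥S, (s : G) - (g (F s) : G) ∈ S ⊓ f.ker := by
    intro s
    have : f (g (F s)) = f s := congrArg Subtype.val (hg (F s))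
    exact AddSubgroup.mem_inf.2 ⟨sub_mem s.2 (g (F s)).2,
      by simp [AddMonoidHom.mem_ker, this]⟩
  have hinj : Function.Injective
      (fun s : ↥S => ((F s, ⟨(s : G) - (g (F s) : G), hker s⟩) :
        ↥(S.map f) × ↥(S ⊓ f.ker))) := by
    intro s t h
    have h1 : F s = F t := congrArg Prod.fst h
    have h2 : (s : G) - (g (F s) : G) = (t : G) - (g (F t) : G) :=
      congrArg Subtype.val (congrArg Prod.snd h)
    rw [h1] at h2
    exact Subtype.ext (sub_left_inj.mp h2)
  calc Cardinal.mk ↥S ≤ Cardinal.mk (↥(S.map f) × ↥(S ⊓ f.ker)) :=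
        Cardinal.mk_le_of_injective hinj
    _ = _ := by rw [Cardinal.mk_prod, Cardinal.lift_id, Cardinal.lift_id]

lemma sm'_one (S : AddSubgroup G) : sm' 1 S = S := by
  ext x
  simp only [mem_sm', one_smul]
  exact ⟨fun ⟨s, hs, h⟩ => h ▸ hs, fun hx => ⟨x, hx, rfl⟩⟩

lemma sm'_sm' (m n : ℕ) (S : AddSubgroup G) : sm' m (sm' n S) = sm' (m * n) S := by
  ext x
  simp only [mem_sm']
  constructor
  · rintro ⟨y, ⟨s, hs, rfl⟩, rfl⟩
    exact ⟨s, hs, by rw [← smul_smul]⟩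
  · rintro ⟨s, hs, rfl⟩
    exact ⟨n • s, ⟨s, hs, rfl⟩, by rw [← smul_smul]⟩

lemma lemC : ∀ (d : ℕ) (M : AddSubgroup G),
    Cardinal.aleph0 ≤ Cardinal.mk ↥(sm' d M) → Cardinal.mk ↥(sm' d M) < Cardinal.mk ↥M →
    ∃ W : AddSubgroup G, W ≤ M ∧ W ≠ ⊥ ∧ PureIn' W M ∧ ∀ x ∈ W, d • x = 0 := by
  classical
  intro d
  induction d using Nat.strong_induction_on with
  | _ d IH =>
  intro M hinf hlt
  by_cases hd0 : d = 0
  · exfalso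
    subst hd0
    have hsub : Subsingleton ↥(sm' 0 M) := by
      constructor
      rintro ⟨x, hx⟩ ⟨y, hy⟩
      rcases mem_sm'.1 hx with ⟨s, _, rfl⟩
      rcases mem_sm'.1 hy with ⟨t, _, rfl⟩
      simp [zero_nsmul]
    have h1 : Cardinal.mk ↥(sm' 0 M) ≤ 1 := Cardinal.le_one_iff_subsingleton.2 hsub
    exact absurd (le_trans hinf h1) (by simp [Cardinal.one_lt_aleph0.not_ge])
  by_cases hd1 : d = 1
  · exfalso; subst hd1; rw [sm'_one] at hlt; exact lt_irrefl _ hlt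
  -- now d ≥ 2
  set p := d.minFac with hp'
  have hp : p.Prime := Nat.minFac_prime hd1
  set a := d.factorization p with ha'
  have hpd : p ∣ d := Nat.minFac_dvd d
  have ha : 0 < a := hp.factorization_pos_of_dvd hd0 hpd
  set e := d / p ^ a with he'
  have hde : p ^ a * e = d := Nat.ordProj_mul_ordCompl_eq_self d p
  have hpe : ¬ p ∣ e := by
    rw [he', ha']
    exact Nat.not_dvd_ordCompl (n := d) hp hd0
  have he0 : 0 < e := Nat.pos_of_ne_zero (fun h0 => by rw [h0, mul_zero] at hde; exact hd0 hde.symm)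
  have hpa1 : 1 < p ^ a := Nat.one_lt_pow (by omega) hp.one_lt
  have hed : e < d := by
    rw [he']; exact Nat.div_lt_self (Nat.pos_of_ne_zero hd0) hpa1
  set N := sm' (p ^ a) M with hN'
  have hNM : N ≤ M := sm'_le_self _ M
  set socle := M ⊓ (p • AddMonoidHom.id G).ker with hsoc'
  have hmemsoc : ∀ x : G, x ∈ socle ↔ x ∈ M ∧ p • x = 0 := fun x => Iff.rfl
  by_cases hsN : socle ≤ N
  · -- case (ii)
    by_cases hrec : Cardinal.mk ↥(sm' e N) < Cardinal.mk ↥N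
    · -- recurse
      have heN : sm' e N = sm' d M := by
        rw [hN', sm'_sm', mul_comm, hde]
      obtain ⟨W, hWN, hW0, hWpure, hWe⟩ := IH e hed N (by rwa [heN]) hrec
      refine ⟨W, le_trans hWN hNM, hW0, ?_, ?_⟩
      · -- purity transfer
        obtain ⟨α, β, hαβ⟩ : ∃ α β : ℤ, α * (p : ℕ) + β * (e : ℕ) = 1 := by
          have := Nat.isCoprime_iff_coprime.mpr (hp.coprime_iff_not_dvd.mpr hpe)
          rcases this with ⟨α, β, h⟩
          exact ⟨α, β, h⟩
        have hcast : ∀ (m : ℕ) (u : G), (m : ℤ) • u = m • u := fun m u => natCast_zsmul u m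
        have hfix : ∀ w ∈ W, (α * (p:ℕ)) • w = w := by
          intro w hw
          have h1 : (α * (p:ℕ)) • w = (1 - β * (e:ℕ)) • w := by
            congr 1; linarith [hαβ]
          rw [h1, sub_zsmul, one_zsmul, mul_zsmul, hcast, hWe w hw, smul_zero]
          abel
        have hpow : ∀ (j : ℕ), ∀ w ∈ W, ((α * (p:ℕ)) ^ j) • w = w := by
          intro j
          induction j with
          | zero => intro w _; rw [pow_zero, one_zsmul]
          | succ j IHj =>
            intro w hw
            rw [pow_succ, mul_zsmul, hfix w hw]
            exact IHj w hw
        intro n z hzW hzn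
        rcases mem_sm'.1 hzn with ⟨m, hm, hnm⟩
        have h2 : p ^ a • z ∈ sm' n N := by
          refine mem_sm'.2 ⟨p ^ a • m, mem_sm'.2 ⟨m, hm, rfl⟩, ?_⟩
          rw [← hnm, smul_comm]
        rcases mem_sm'.1 (hWpure n (p ^ a • z) (nsmul_mem hzW _) h2) with ⟨w₁, hw₁, hnw₁⟩
        refine mem_sm'.2 ⟨(α ^ a) • w₁, zsmul_mem hw₁ _, ?_⟩
        have h3 : n • (α ^ a) • w₁ = (α ^ a) • (n • w₁) := smul_comm _ _ _
        rw [h3, hnw₁]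
        have h4 : (α ^ a) • (p ^ a • z) = ((α * (p:ℕ)) ^ a) • z := by
          rw [← hcast (p ^ a) z, smul_smul]
          congr 1
          push_cast
          rw [mul_pow]
        rw [h4]
        exact hpow a z hzW
      · -- boundedness
        intro x hx
        have : d • x = p ^ a • (e • x) := by rw [smul_smul, hde]
        rw [this, hWe x hx, smul_zero]
    · -- cardinality contradiction
      exfalso
      push_neg at hrec
      have h1 : Cardinal.mk ↥(sm' e N) ≤ Cardinal.mk ↥N := mk_mono' (sm'_le_self e N)
      have heN : sm' e N = sm' d M := by rw [hN', sm'_sm', mul_comm, hde]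
      have hNκ : Cardinal.mk ↥N = Cardinal.mk ↥(sm' d M) := by
        rw [← heN]; exact le_antisymm hrec h1
      set κ := Cardinal.mk ↥(sm' d M) with hκ'
      have hκinf : Cardinal.aleph0 ≤ κ := hinf
      -- torsion filtration bound
      have hTk : ∀ k : ℕ, Cardinal.mk ↥(M ⊓ ((p ^ k) • AddMonoidHom.id G).ker) ≤ κ := by
        intro k
        induction k with
        | zero =>
          have hsub : Subsingleton ↥(M ⊓ ((p ^ 0) • AddMonoidHom.id G).ker) := by
            constructor
            rintro ⟨x, hx⟩ ⟨y, hy⟩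
            have hx2 : x = 0 := by
              have := (AddSubgroup.mem_inf.1 hx).2
              simpa [AddMonoidHom.mem_ker] using this
            have hy2 : y = 0 := by
              have := (AddSubgroup.mem_inf.1 hy).2
              simpa [AddMonoidHom.mem_ker] using this
            apply Subtype.ext
            show x = y
            rw [hx2, hy2]
          exact le_trans (Cardinal.le_one_iff_subsingleton.2 hsub)
            (le_trans Cardinal.one_le_aleph0 hκinf)
        | succ k IHk =>
          set S := M ⊓ ((p ^ (k+1)) • AddMonoidHom.id G).ker with hS'
          have hmap : S.map ((p ^ k) • AddMonoidHom.id G) ≤ socle := by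
            rintro x hx
            rcases AddSubgroup.mem_map.1 hx with ⟨s, hs, rfl⟩
            have hsM : s ∈ M := (AddSubgroup.mem_inf.1 hs).1
            have h2 : p ^ (k+1) • s = 0 := by
              have := (AddSubgroup.mem_inf.1 hs).2
              simpa [AddMonoidHom.mem_ker] using this
            have h3 : (((p ^ k) • AddMonoidHom.id G) s) = p ^ k • s := rfl
            rw [h3]
            refine AddSubgroup.mem_inf.2 ⟨nsmul_mem hsM _, AddMonoidHom.mem_ker.2 ?_⟩
            show p • (p ^ k • s) = 0
            rw [smul_smul, show p * p ^ k = p ^ (k+1) by rw [pow_succ, mul_comm]]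
            exact h2
          have hker : S ⊓ ((p ^ k) • AddMonoidHom.id G).ker ≤
              M ⊓ ((p ^ k) • AddMonoidHom.id G).ker := by
            rintro x hx
            exact ⟨hx.1.1, hx.2⟩
          calc Cardinal.mk ↥S ≤ _ := mk_le_map_mul_ker' S ((p ^ k) • AddMonoidHom.id G)
            _ ≤ κ * κ := by
                refine mul_le_mul' (le_trans (mk_mono' hmap) ?_) (le_trans (mk_mono' hker) IHk)
                exact le_trans (mk_mono' hsN) (le_of_eq hNκ)
            _ = κ := Cardinal.mul_eq_self hκinf
      -- final contradiction
      have hfin : Cardinal.mk ↥M ≤ κ := by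
        have h2 := mk_le_map_mul_ker' M ((p ^ a) • AddMonoidHom.id G)
        have h3 : M.map ((p ^ a) • AddMonoidHom.id G) = N := rfl
        calc Cardinal.mk ↥M ≤ _ := h2
          _ ≤ κ * κ := by
              rw [h3]
              exact mul_le_mul' (le_of_eq hNκ) (hTk a)
          _ = κ := Cardinal.mul_eq_self hκinf
      exact absurd (lt_of_lt_of_le hlt hfin) (lt_irrefl κ)
  · -- case (i): low-height socle element
    rcases SetLike.not_le_iff_exists.1 hsN with ⟨x, hxsoc, hxN⟩
    obtain ⟨hxM, hpx⟩ := (hmemsoc x).1 hxsoc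
    have hx0 : x ≠ 0 := fun h0 => hxN (h0 ▸ (sm' (p ^ a) M).zero_mem)
    have hex : ∃ j : ℕ, x ∉ sm' (p ^ j) M := ⟨a, hxN⟩
    set j₀ := Nat.find hex with hj₀'
    have hj₀ : x ∉ sm' (p ^ j₀) M := Nat.find_spec hex
    have hj₀a : j₀ ≤ a := Nat.find_min' hex hxN
    have hj₀0 : j₀ ≠ 0 := by
      intro h0
      apply hj₀
      rw [h0, pow_zero, sm'_one]
      exact hxM
    set h := j₀ - 1 with hh'
    have hxh : x ∈ sm' (p ^ h) M := by
      by_contra hc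
      exact absurd (Nat.find_min' hex hc) (by omega)
    have hxh1 : x ∉ sm' (p ^ (h+1)) M := by
      have : h + 1 = j₀ := by omega
      rw [this]; exact hj₀
    rcases mem_sm'.1 hxh with ⟨y, hyM, hyx⟩
    refine ⟨AddSubgroup.zmultiples y, ?_, ?_, height_pure hp M x y h hyM hyx hx0 hpx hxh1, ?_⟩
    · exact (AddSubgroup.zmultiples_le).2 hyM
    · intro hW0
      apply hx0
      have hxW : x ∈ AddSubgroup.zmultiples y := by
        refine AddSubgroup.mem_zmultiples_iff.2 ⟨(p ^ h : ℕ), ?_⟩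
        rw [natCast_zsmul]; exact hyx
      rw [hW0] at hxW
      simpa using hxW
    · intro z hz
      rcases AddSubgroup.mem_zmultiples_iff.1 hz with ⟨k, rfl⟩
      have hdvd : p ^ (h+1) ∣ d := dvd_trans (pow_dvd_pow p (by omega)) (Nat.ordProj_dvd d p)
      rcases hdvd with ⟨q, hq⟩
      have h1 : d • (k • y) = k • (d • y) := smul_comm _ _ _
      have h3 : p ^ (h+1) • y = 0 := by
        have h4 : p ^ (h+1) • y = p • (p ^ h • y) := by rw [smul_smul, pow_succ, mul_comm]
        rw [h4, hyx, hpx]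
      have h2 : d • y = 0 := by
        have h5 : d • y = q • (p ^ (h+1) • y) := by rw [smul_smul, hq, mul_comm]
        rw [h5, h3, smul_zero]
      rw [h1, h2, smul_zero]

end LemC

section Main
variable {G : Type} [AddCommGroup G]
open Cardinal

lemma mk_nsmulRange_sub (n : ℕ) (M : AddSubgroup G) :
    Cardinal.mk ↥(nsmulRange n ↥M) = Cardinal.mk ↥(sm' n M) := by
  apply Cardinal.mk_congr
  refine ⟨fun x => ⟨((x : ↥M) : G), ?_⟩, fun y => ⟨⟨(y : G), sm'_le_self n M y.2⟩, ?_⟩, ?_, ?_⟩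
  · rcases AddMonoidHom.mem_range.1 x.2 with ⟨z, hz⟩
    refine mem_sm'.2 ⟨(z : G), z.2, ?_⟩
    have h1 : ((n • z : ↥M) : G) = n • (z : G) := by simp
    rw [← h1]
    exact congrArg Subtype.val hz
  · rcases mem_sm'.1 y.2 with ⟨s, hs, hns⟩
    refine AddMonoidHom.mem_range.2 ⟨⟨s, hs⟩, ?_⟩
    apply Subtype.ext
    show n • s = (y : G)
    exact hns
  · intro x; apply Subtype.ext; apply Subtype.ext; rfl
  · intro y; apply Subtype.ext; rfl

lemma mk_bot_subgroup : ∀ (A : Type) [inst : AddCommGroup A], WDivisible ↥(⊥ : AddSubgroup A) := by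
  intro A inst n hn
  have hsub1 : Subsingleton ↥(⊥ : AddSubgroup A) := by
    constructor; rintro ⟨x, hx⟩ ⟨y, hy⟩
    apply Subtype.ext
    show x = y
    rw [AddSubgroup.mem_bot.1 hx, AddSubgroup.mem_bot.1 hy]
  have hsub2 : Subsingleton ↥(nsmulRange n ↥(⊥ : AddSubgroup A)) := by
    constructor; intro a b
    apply Subtype.ext
    exact Subsingleton.elim _ _
  have e1 : Cardinal.mk ↥(nsmulRange n ↥(⊥ : AddSubgroup A)) = 1 :=
    le_antisymm (Cardinal.le_one_iff_subsingleton.2 hsub2)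
      (Cardinal.one_le_iff_ne_zero.2 (Cardinal.mk_ne_zero _))
  have e2 : Cardinal.mk ↥(⊥ : AddSubgroup A) = 1 :=
    le_antisymm (Cardinal.le_one_iff_subsingleton.2 hsub1)
      (Cardinal.one_le_iff_ne_zero.2 (Cardinal.mk_ne_zero _))
  rw [e1, e2]

theorem main_thm (G : Type) [AddCommGroup G] :
    ∃ K M : AddSubgroup G, IsCompl K M ∧
      (∃ m : ℕ, 0 < m ∧ ∀ x ∈ K, m • x = 0) ∧
      WDivisible ↥M := by
  classical
  set F : ℕ → Cardinal := fun n => Cardinal.mk ↥(sm' n (⊤ : AddSubgroup G)) with hF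
  obtain ⟨κ, ⟨d, hd0, hdκ⟩, hmin⟩ :=
    Cardinal.lt_wf.has_min (F '' {n | 0 < n}) ⟨F 1, 1, Nat.one_pos, rfl⟩
  have hdmin : ∀ n, 0 < n → κ ≤ F n := by
    intro n hn
    by_contra hlt
    exact hmin (F n) ⟨n, hn, rfl⟩ (not_le.1 hlt)
  by_cases hκfin : κ < Cardinal.aleph0
  · -- G is bounded
    have hfin : Finite ↥(sm' d (⊤ : AddSubgroup G)) := by
      rw [← Cardinal.lt_aleph0_iff_finite]
      have h9 : F d < Cardinal.aleph0 := by rw [hdκ]; exact hκfin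
      exact h9
    set D := sm' d (⊤ : AddSubgroup G) with hD'
    set n₀ := Nat.card ↥D with hn₀
    have hn₀pos : 0 < n₀ := Nat.card_pos
    have hd0' : 0 < d := hd0
    refine ⟨⊤, ⊥, isCompl_top_bot, ⟨n₀ * d, Nat.mul_pos hn₀pos hd0', ?_⟩, mk_bot_subgroup G⟩
    intro x _
    have hmem : d • x ∈ D := mem_sm'.2 ⟨x, trivial, rfl⟩
    have h1 : n₀ • (⟨d • x, hmem⟩ : ↥D) = 0 := card_nsmul_eq_zero'
    have h2 : n₀ • (d • x) = 0 := by
      have := congrArg Subtype.val h1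
      simpa using this
    rw [← smul_smul]
    exact h2
  · -- infinite case
    push_neg at hκfin
    set 𝒮 : Set (AddSubgroup G) := {V | (∀ x ∈ V, d • x = 0) ∧ PureIn' V ⊤} with h𝒮
    have hbot : (⊥ : AddSubgroup G) ∈ 𝒮 := by
      constructor
      · intro x hx; rw [AddSubgroup.mem_bot.1 hx, smul_zero]
      · intro n x hx _
        rw [AddSubgroup.mem_bot.1 hx]
        exact zero_mem _
    obtain ⟨V, -, hVmax⟩ := zorn_le_nonempty₀ 𝒮 (fun c hcs hchain y hy => by
      refine ⟨sSup c, ?_, fun z hz => le_sSup hz⟩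
      have hcne : c.Nonempty := ⟨y, hy⟩
      have hdir : DirectedOn (· ≤ ·) c := hchain.directedOn
      have hmem : ∀ x : G, x ∈ sSup c ↔ ∃ T ∈ c, x ∈ T := fun x =>
        AddSubgroup.mem_sSup_of_directedOn hcne hdir
      constructor
      · intro x hx
        rcases (hmem x).1 hx with ⟨T, hTc, hxT⟩
        exact (hcs hTc).1 x hxT
      · intro n x hx hxn
        rcases (hmem x).1 hx with ⟨T, hTc, hxT⟩
        exact sm'_mono (le_sSup hTc) ((hcs hTc).2 n x hxT hxn)) ⊥ hbot
    obtain ⟨hVb, hVpure⟩ := hVmax.prop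
    obtain ⟨M, -, hVM, hsup⟩ := S3 d hd0 ⊤ V le_top hVb hVpure
    have hcompl : IsCompl V M := by
      rw [isCompl_iff]
      constructor
      · rw [disjoint_iff]; exact hVM
      · rw [codisjoint_iff, eq_top_iff]
        intro g _
        exact hsup g trivial
    have hdM : ∀ n : ℕ, sm' (n * d) (⊤ : AddSubgroup G) ≤ sm' n M := by
      intro n x hx
      rcases mem_sm'.1 hx with ⟨g, -, rfl⟩
      rcases AddSubgroup.mem_sup.1 (hsup g trivial) with ⟨v, hv, m, hm, hvm⟩
      refine mem_sm'.2 ⟨d • m, nsmul_mem hm d, ?_⟩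
      rw [smul_smul]
      have hv0 : (n * d) • v = 0 := by
        rw [← smul_smul, hVb v hv, smul_zero]
      have : (n * d) • g = (n * d) • v + (n * d) • m := by rw [← smul_add, hvm]
      rw [this, hv0, zero_add]
    have hdd : sm' d (⊤ : AddSubgroup G) = sm' d M := by
      apply le_antisymm
      · intro x hx
        rcases mem_sm'.1 hx with ⟨g, -, rfl⟩
        rcases AddSubgroup.mem_sup.1 (hsup g trivial) with ⟨v, hv, m, hm, hvm⟩
        refine mem_sm'.2 ⟨m, hm, ?_⟩
        rw [← hvm, smul_add, hVb v hv, zero_add]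
      · exact sm'_mono le_top
    have hκd : Cardinal.mk ↥(sm' d M) = κ := by rw [← hdd]; exact hdκ
    have hMκ : Cardinal.mk ↥M ≤ κ := by
      by_contra hbig
      push_neg at hbig
      obtain ⟨W, hWM, hW0, hWpure, hWd⟩ := lemC d M (by rw [hκd]; exact hκfin)
        (by rw [hκd]; exact hbig)
      have hVW : (V ⊔ W) ∈ 𝒮 := by
        constructor
        · intro x hx
          rcases AddSubgroup.mem_sup.1 hx with ⟨v, hv, w, hw, hvw⟩
          rw [← hvw, smul_add, hVb v hv, hWd w hw, add_zero]
        · intro n x hx hxn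
          rcases AddSubgroup.mem_sup.1 hx with ⟨v, hv, w, hw, hvw⟩
          rcases mem_sm'.1 hxn with ⟨g, -, hg⟩
          rcases AddSubgroup.mem_sup.1 (hsup g trivial) with ⟨gv, hgv, gm, hgm, hgsum⟩
          have hsplit : v + w = n • gv + n • gm := by
            rw [← smul_add, hgsum, hg, hvw]
          have ht : v - n • gv = n • gm - w := by
            have : v + w = n • gv + n • gm := hsplit
            have h9 : v - n • gv - (n • gm - w) = (v + w) - (n • gv + n • gm) := by abel
            rw [this, sub_self] at h9
            have := sub_eq_zero.1 h9
            exact this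
          have htV : v - n • gv ∈ V := sub_mem hv (nsmul_mem hgv n)
          have htM : v - n • gv ∈ M := by
            rw [ht]
            exact sub_mem (nsmul_mem hgm n) (hWM hw)
          have ht0 : v - n • gv = 0 := by
            have : v - n • gv ∈ V ⊓ M := ⟨htV, htM⟩
            rw [hVM] at this
            simpa using this
          have hveq : v = n • gv := by
            have := sub_eq_zero.1 ht0; exact this
          have hweq : w = n • gm := by
            have h10 : n • gm - w = 0 := by rw [← ht, ht0]
            have := sub_eq_zero.1 h10; exact this.symm
          rcases mem_sm'.1 (hVpure n v hv (mem_sm'.2 ⟨gv, trivial, hveq.symm⟩))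
            with ⟨v', hv', hnv'⟩
          rcases mem_sm'.1 (hWpure n w hw (mem_sm'.2 ⟨gm, hgm, hweq.symm⟩))
            with ⟨w', hw', hnw'⟩
          refine mem_sm'.2 ⟨v' + w', ?_, ?_⟩
          · exact add_mem (AddSubgroup.mem_sup_left hv') (AddSubgroup.mem_sup_right hw')
          · rw [smul_add, hnv', hnw', hvw]
      have hWV : W ≤ V := le_trans le_sup_right (hVmax.le_of_ge hVW le_sup_left)
      apply hW0
      rw [eq_bot_iff]
      intro x hx
      have : x ∈ V ⊓ M := ⟨hWV hx, hWM hx⟩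
      rw [hVM] at this
      exact this
    refine ⟨V, M, hcompl, ⟨d, hd0, hVb⟩, ?_⟩
    intro n hn
    rw [mk_nsmulRange_sub]
    apply le_antisymm
    · exact mk_mono' (sm'_le_self n M)
    · calc Cardinal.mk ↥M ≤ κ := hMκ
        _ ≤ F (n * d) := hdmin (n * d) (Nat.mul_pos hn hd0)
        _ ≤ Cardinal.mk ↥(sm' n M) := mk_mono' (hdM n)

end Main


/-- Every abelian group `G` decomposes as `G = K ⊕ M` with `K` a bounded torsion group and
`M` a `w`-divisible group. -/
theorem exists_bounded_wDivisible_decomposition (G : Type) [AddCommGroup G] :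
    ∃ K M : AddSubgroup G, IsCompl K M ∧
      (∃ m : ℕ, 0 < m ∧ ∀ x ∈ K, m • x = 0) ∧
      WDivisible ↥M := by
  exact main_thm G
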